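/- Let p be a nonzero real number, t a real number, r a positive integer, and a₁, …, a_r ∈ ℂ. Define g(s) = Σ_{k=1}^r a_k·(s−ip)^{−k} and R(t) = e^{ipt}·Σ_{k=1}^{r} Σ_{l=0}^{k−1} a_k·(−1)^{l−k+1}·(ip)^{l−k}·t^l/l!. Then for every radius ρ with 0 < ρ < |p|, the circle integral (1/(2πi)) ∮_{|s−ip|=ρ} e^{st}·g(s)/s ds equals R(t); moreover, as a function of t, R is differentiable with R′(t) = e^{ipt}·Σ_{k=1}^{r} a_k·t^{k−1}/(k−1)!. -/

import Mathlib

open MeasureTheory intervalIntegral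

namespace St3Aux
open Complex Metric

lemma iter_exp (t : ℂ) (n : ℕ) (x : ℂ) :
    iteratedDeriv n (fun z => Complex.exp (z * t)) x = t ^ n * Complex.exp (x * t) := by
  induction n generalizing x with
  | zero => simp
  | succ n ih =>
    rw [iteratedDeriv_succ]
    have : iteratedDeriv n (fun z => Complex.exp (z * t)) = fun x => t ^ n * Complex.exp (x * t) :=
      funext fun x => ih x
    rw [this]
    have h : HasDerivAt (fun x : ℂ => t ^ n * Complex.exp (x * t)) (t ^ (n+1) * Complex.exp (x * t)) x := by
      have := ((hasDerivAt_id x).mul_const t).cexp.const_mul (t ^ n)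
      exact this.congr_deriv (by simp only [id, one_mul]; ring)
    exact h.deriv

lemma key (c : ℂ) {ρ : ℝ} (hρ : 0 < ρ) (t : ℂ) (n : ℕ) :
    (∮ z in C(c, ρ), Complex.exp (z * t) * (z - c) ^ (-(n : ℤ) - 1)) =
      (2 * Real.pi * Complex.I) * (t ^ n * Complex.exp (c * t) / n.factorial) := by
  set f : ℂ → ℂ := fun z => Complex.exp (z * t) with hf
  have hd : Differentiable ℂ f := (differentiable_id.mul_const t).cexp
  set ρ' : NNReal := ⟨ρ, hρ.le⟩ with hρ'
  have hball : HasFPowerSeriesOnBall f (cauchyPowerSeries f c ρ') c ρ' :=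
    hd.differentiableOn.hasFPowerSeriesOnBall (by exact_mod_cast hρ)
  have hcoeff := hball.factorial_smul (1 : ℂ) n
  rw [iteratedFDeriv_apply_eq_iteratedDeriv_mul_prod, iter_exp] at hcoeff
  rw [cauchyPowerSeries_apply] at hcoeff
  have hint : (∮ z in C(c, (ρ' : ℝ)), (1 / (z - c)) ^ n • (z - c)⁻¹ • f z) =
      ∮ z in C(c, ρ), Complex.exp (z * t) * (z - c) ^ (-(n : ℤ) - 1) := by
    have hcoe : (ρ' : ℝ) = ρ := rfl
    rw [hcoe]
    apply circleIntegral.integral_congr hρ.le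
    intro z hz
    have hzc : z - c ≠ 0 := sub_ne_zero.2 (by
      intro h; rw [h] at hz; simp [Metric.mem_sphere] at hz; exact hρ.ne hz)
    simp only [smul_eq_mul, hf, one_div, inv_pow]
    rw [zpow_sub₀ hzc, zpow_neg, zpow_natCast, zpow_one]
    ring
  rw [hint] at hcoeff
  simp only [Finset.prod_const, Finset.card_univ, Fintype.card_fin, one_pow, one_smul,
    nsmul_eq_mul, smul_eq_mul] at hcoeff
  have h2πI : (2 * (Real.pi:ℂ) * Complex.I) ≠ 0 := by
    simp [Real.pi_ne_zero, Complex.I_ne_zero]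
  have hfact : (n.factorial : ℂ) ≠ 0 := by exact_mod_cast n.factorial_ne_zero
  rw [← mul_div_assoc, eq_div_iff hfact]
  have hw := mul_inv_cancel₀ h2πI
  linear_combination (2 * (Real.pi:ℂ) * Complex.I) * hcoeff - (∮ z in C(c, ρ), Complex.exp (z * t) * (z - c) ^ (-(n : ℤ) - 1)) * (n.factorial : ℂ) * hw

lemma geom_id (c z : ℂ) (hc : c ≠ 0) (hz : z ≠ 0) (k : ℕ) :
    z⁻¹ = (∑ n ∈ Finset.range k, (-1 : ℂ) ^ n * c ^ (-(n : ℤ) - 1) * (z - c) ^ n)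
      + (-1 : ℂ) ^ k * c ^ (-(k : ℤ)) * (z - c) ^ k / z := by
  induction k with
  | zero => simp
  | succ k ih =>
    have h2 : c ^ (-((k:ℕ)+1 : ℕ) : ℤ) = c ^ (-(k:ℤ)) * c⁻¹ := by
      push_cast
      rw [neg_add, zpow_add₀ hc]
      norm_num
    have hkey : (-1:ℂ)^k * c ^ (-(k:ℤ)) * (z-c)^k / z
        = (-1:ℂ)^k * c ^ (-(k:ℤ)-1) * (z - c)^k
          + (-1:ℂ)^(k+1) * (c ^ (-(k:ℤ)) * c⁻¹) * (z-c)^(k+1) / z := by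
      rw [zpow_sub₀ hc, zpow_one]
      generalize c ^ (-(k:ℤ)) = w
      field_simp
      ring
    rw [Finset.sum_range_succ, ih, hkey, h2]
    push_cast
    ring

lemma circleIntegral_finset_sum {ι : Type*} (s : Finset ι) (f : ι → ℂ → ℂ) (c : ℂ) (R : ℝ)
    (h : ∀ i ∈ s, CircleIntegrable (f i) c R) :
    (∮ z in C(c, R), ∑ i ∈ s, f i z) = ∑ i ∈ s, ∮ z in C(c, R), f i z := by
  simp only [circleIntegral]
  rw [← intervalIntegral.integral_finset_sum (fun i hi => ((circleIntegrable_iff R).1 (h i hi)))]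
  congr 1
  funext θ
  rw [Finset.smul_sum]

lemma circleIntegral_add' {f g : ℂ → ℂ} {c : ℂ} {R : ℝ} (hf : CircleIntegrable f c R)
    (hg : CircleIntegrable g c R) :
    (∮ z in C(c, R), (f z + g z)) = (∮ z in C(c, R), f z) + ∮ z in C(c, R), g z := by
  simp only [circleIntegral]
  rw [← intervalIntegral.integral_add ((circleIntegrable_iff R).1 hf) ((circleIntegrable_iff R).1 hg)]
  congr 1
  funext θ
  rw [smul_add]

lemma perk (c : ℂ) {ρ : ℝ} (hρ : 0 < ρ) (hρc : ρ < ‖c‖) (t : ℂ) (k : ℕ) :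
    (∮ z in C(c, ρ), Complex.exp (z * t) * (z - c) ^ (-(k : ℤ)) / z) =
      (2 * Real.pi * Complex.I) * Complex.exp (c * t) *
        ∑ l ∈ Finset.range k, (-1:ℂ) ^ ((l:ℤ) - k + 1) * c ^ ((l:ℤ) - k) * (t ^ l)
          / (Nat.factorial l) := by
  have hc : c ≠ 0 := by
    intro h; rw [h] at hρc; simp at hρc; linarith
  have hz0 : ∀ z ∈ sphere c ρ, z ≠ 0 := by
    intro z hz h0
    rw [mem_sphere_iff_norm, h0] at hz
    simp only [zero_sub, norm_neg] at hz
    linarith [hz ▸ hρc]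
  have hzc : ∀ z ∈ sphere c ρ, z ≠ c := fun z hz h0 => by
    rw [mem_sphere_iff_norm, h0] at hz; simp at hz; linarith
  -- integrand decomposition
  have hcongr : (∮ z in C(c, ρ), Complex.exp (z * t) * (z - c) ^ (-(k : ℤ)) / z) =
      ∮ z in C(c, ρ), ((∑ n ∈ Finset.range k,
        (-1:ℂ) ^ n * c ^ (-(n : ℤ) - 1) * (Complex.exp (z * t) * (z - c) ^ ((n:ℤ) - k)))
        + (-1:ℂ) ^ k * c ^ (-(k : ℤ)) * (Complex.exp (z * t) / z)) := by
    apply circleIntegral.integral_congr hρ.le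
    intro z hz
    have h1 : z ≠ 0 := hz0 z hz
    have h2 : z - c ≠ 0 := sub_ne_zero.2 (hzc z hz)
    simp only
    rw [div_eq_mul_inv (Complex.exp (z*t) * _), geom_id c z hc h1 k, mul_add, Finset.mul_sum]
    congr 1
    · apply Finset.sum_congr rfl
      intro n hn
      rw [zpow_sub₀ h2, zpow_natCast]
      field_simp
      rw [← zpow_add₀ h2, neg_add_cancel, zpow_zero]
    · rw [div_eq_mul_inv (Complex.exp (z*t)), div_eq_mul_inv ((-1:ℂ)^k * c^(-(k:ℤ)) * _),
        ← zpow_natCast (z - c) k]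
      rw [show Complex.exp (z*t) * (z-c)^(-(k:ℤ)) * ((-1:ℂ)^k * c^(-(k:ℤ)) * (z-c)^(k:ℤ) * z⁻¹)
        = (-1:ℂ)^k * c^(-(k:ℤ)) * (Complex.exp (z*t) * z⁻¹) * ((z-c)^(-(k:ℤ)) * (z-c)^(k:ℤ)) by ring]
      rw [← zpow_add₀ h2]
      simp
  rw [hcongr]
  -- integrability
  have hint : ∀ n ∈ Finset.range k, CircleIntegrable (fun z =>
      (-1:ℂ) ^ n * c ^ (-(n : ℤ) - 1) * (Complex.exp (z * t) * (z - c) ^ ((n:ℤ) - k))) c ρ := by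
    intro n _
    apply ContinuousOn.circleIntegrable hρ.le
    apply ContinuousOn.mul continuousOn_const
    apply ContinuousOn.mul (Continuous.continuousOn (by continuity))
    exact (continuousOn_id.sub continuousOn_const).zpow₀ _
      (fun z hz => Or.inl (sub_ne_zero.2 (hzc z hz)))
  have hint0 : CircleIntegrable (fun z =>
      (-1:ℂ) ^ k * c ^ (-(k : ℤ)) * (Complex.exp (z * t) / z)) c ρ := by
    apply ContinuousOn.circleIntegrable hρ.le
    apply ContinuousOn.mul continuousOn_const
    exact ContinuousOn.div (Continuous.continuousOn (by continuity)) continuousOn_id hz0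
  have hintsum : CircleIntegrable (fun z => ∑ n ∈ Finset.range k,
      (-1:ℂ) ^ n * c ^ (-(n : ℤ) - 1) * (Complex.exp (z * t) * (z - c) ^ ((n:ℤ) - k))) c ρ := by
    apply ContinuousOn.circleIntegrable hρ.le
    apply continuousOn_finset_sum
    intro n _
    apply ContinuousOn.mul continuousOn_const
    apply ContinuousOn.mul (Continuous.continuousOn (by continuity))
    exact (continuousOn_id.sub continuousOn_const).zpow₀ _
      (fun z hz => Or.inl (sub_ne_zero.2 (hzc z hz)))
  rw [circleIntegral_add' hintsum hint0]
  rw [circleIntegral_finset_sum _ _ _ _ hint]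
  -- the single term vanishes
  have hzero : (∮ z in C(c, ρ), (-1:ℂ) ^ k * c ^ (-(k : ℤ)) * (Complex.exp (z * t) / z)) = 0 := by
    rw [circleIntegral.integral_const_mul]
    rw [circleIntegral_eq_zero_of_differentiable_on_off_countable hρ.le Set.countable_empty
      ?hcont ?hdiff, mul_zero]
    case hcont =>
      apply ContinuousOn.div (Continuous.continuousOn (by continuity)) continuousOn_id
      intro z hz h0
      simp only [id_eq] at h0
      rw [mem_closedBall, h0, dist_zero_left] at hz
      linarith
    case hdiff =>
      intro z hz
      have h0 : z ≠ 0 := by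
        intro h0
        have := hz.1
        rw [mem_ball, h0, dist_zero_left] at this
        linarith
      exact ((differentiable_id.mul_const t).cexp.differentiableAt).div differentiableAt_id h0
  rw [hzero, add_zero]
  -- evaluate each term via key
  have hterm : ∀ n ∈ Finset.range k,
      (∮ z in C(c, ρ), (-1:ℂ) ^ n * c ^ (-(n : ℤ) - 1) * (Complex.exp (z * t) * (z - c) ^ ((n:ℤ) - k)))
      = (-1:ℂ) ^ n * c ^ (-(n : ℤ) - 1) *
        ((2 * Real.pi * Complex.I) * (t ^ (k - 1 - n) * Complex.exp (c * t) / (Nat.factorial (k - 1 - n)))) := by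
    intro n hn
    rw [Finset.mem_range] at hn
    rw [circleIntegral.integral_const_mul]
    congr 1
    have hcast : ((n:ℤ) - k) = -((k - 1 - n : ℕ) : ℤ) - 1 := by
      have : ((k - 1 - n : ℕ) : ℤ) = (k:ℤ) - 1 - n := by omega
      rw [this]; ring
    rw [hcast]
    exact key c hρ t (k - 1 - n)
  rw [Finset.sum_congr rfl hterm]
  -- reindex
  rw [← Finset.sum_range_reflect]
  rw [Finset.mul_sum]
  apply Finset.sum_congr rfl
  intro l hl
  rw [Finset.mem_range] at hl
  have h1 : k - 1 - (k - 1 - l) = l := by omega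
  rw [h1]
  have h2 : ((k - 1 - l : ℕ) : ℤ) = (k:ℤ) - 1 - l := by omega
  have h3 : (-1:ℂ) ^ ((l:ℤ) - k + 1) = (-1:ℂ) ^ (k - 1 - l : ℕ) := by
    rw [show ((l:ℤ) - k + 1) = -((k:ℤ) - 1 - l) by ring, ← h2, zpow_neg, ← inv_zpow, inv_neg, inv_one,
      zpow_natCast]
  have h4 : c ^ ((l:ℤ) - k) = c ^ (-((k - 1 - l : ℕ):ℤ) - 1) := by
    rw [h2]; ring_nf
  rw [h3, h4]
  ring

lemma tele (u : ℕ → ℂ) (m : ℕ) :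
    (∑ l ∈ Finset.range (m + 1), (u l + (if l = 0 then 0 else -u (l - 1)))) = u m := by
  rw [Finset.sum_range_succ']
  have : ∀ l, u (l+1) + (if l + 1 = 0 then 0 else -u (l + 1 - 1)) = u (l+1) - u l := fun l => by
    rw [if_neg (Nat.succ_ne_zero _), Nat.add_sub_cancel]; ring
  simp only [this, Finset.sum_range_sub u m]
  simp

lemma part2 (c : ℂ) (hc : c ≠ 0) (t : ℝ) (r : ℕ) (hr : 0 < r) (a : ℕ → ℂ) :
    HasDerivAt (fun τ : ℝ => Complex.exp (c * τ) *
      ∑ k ∈ Finset.Icc 1 r, ∑ l ∈ Finset.range k,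
        a k * (-1 : ℂ) ^ ((l : ℤ) - k + 1) * c ^ ((l : ℤ) - k) *
          (τ : ℂ) ^ l / (Nat.factorial l))
      (Complex.exp (c * t) *
        ∑ k ∈ Finset.Icc 1 r, a k * (t : ℂ) ^ (k - 1) / (Nat.factorial (k - 1))) t := by
  set C : ℕ → ℕ → ℂ := fun k l => a k * (-1 : ℂ) ^ ((l : ℤ) - k + 1) * c ^ ((l : ℤ) - k) with hC
  -- complex derivative
  have hS : ∀ w : ℂ, HasDerivAt (fun w : ℂ => ∑ k ∈ Finset.Icc 1 r, ∑ l ∈ Finset.range k,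
      C k l * w ^ l / (Nat.factorial l))
      (∑ k ∈ Finset.Icc 1 r, ∑ l ∈ Finset.range k,
        C k l * (l * w ^ (l - 1)) / (Nat.factorial l)) w := by
    intro w
    apply HasDerivAt.fun_sum
    intro k _
    apply HasDerivAt.fun_sum
    intro l _
    exact ((hasDerivAt_pow l w).const_mul (C k l)).div_const _
  have hE : ∀ w : ℂ, HasDerivAt (fun w : ℂ => Complex.exp (c * w)) (c * Complex.exp (c * w)) w := by
    intro w
    have := ((hasDerivAt_id w).const_mul c).cexp
    exact this.congr_deriv (by simp only [id, mul_one]; ring)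
  have hF : HasDerivAt (fun w : ℂ => Complex.exp (c * w) * ∑ k ∈ Finset.Icc 1 r,
      ∑ l ∈ Finset.range k, C k l * w ^ l / (Nat.factorial l))
      (Complex.exp (c * (t:ℂ)) * ∑ k ∈ Finset.Icc 1 r,
        ∑ l ∈ Finset.range k, (c * (C k l * (t:ℂ) ^ l / (Nat.factorial l))
          + C k l * (l * (t:ℂ) ^ (l - 1)) / (Nat.factorial l))) (t : ℂ) := by
    have := (hE (t:ℂ)).mul (hS (t:ℂ))
    refine this.congr_deriv ?_
    simp only [Finset.sum_add_distrib, mul_add, Finset.mul_sum]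
    congr 1 <;>
      refine Finset.sum_congr rfl fun k _ => Finset.sum_congr rfl fun l _ => by ring
  -- the derivative value simplifies
  have hval : ∀ k ∈ Finset.Icc 1 r, (∑ l ∈ Finset.range k,
      (c * (C k l * (t:ℂ) ^ l / (Nat.factorial l)) + C k l * (l * (t:ℂ) ^ (l - 1)) / (Nat.factorial l)))
      = a k * (t : ℂ) ^ (k - 1) / (Nat.factorial (k - 1)) := by
    intro k hk
    rw [Finset.mem_Icc] at hk
    obtain ⟨m, rfl⟩ : ∃ m, k = m + 1 := ⟨k - 1, by omega⟩
    set u : ℕ → ℂ := fun l => c * (C (m+1) l * (t:ℂ) ^ l / (Nat.factorial l)) with hu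
    have hterm : ∀ l ∈ Finset.range (m+1),
        (c * (C (m+1) l * (t:ℂ) ^ l / (Nat.factorial l)) + C (m+1) l * (l * (t:ℂ) ^ (l - 1)) / (Nat.factorial l))
        = u l + (if l = 0 then 0 else -u (l - 1)) := by
      intro l _
      rcases Nat.eq_zero_or_pos l with h0 | h0
      · subst h0; simp [hu]
      · obtain ⟨j, rfl⟩ : ∃ j, l = j + 1 := ⟨l - 1, by omega⟩
        simp only [if_neg (Nat.succ_ne_zero _), Nat.add_sub_cancel, hu]
        congr 1
        have hfac : ((j+1).factorial : ℂ) = (j+1) * (j.factorial : ℂ) := by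
          push_cast [Nat.factorial_succ]; ring
        have hCrel : C (m+1) (j+1) = -c * C (m+1) j := by
          simp only [hC]
          push_cast
          rw [show (j:ℤ) + 1 - ((m:ℤ)+1) + 1 = ((j:ℤ) - ((m:ℤ)+1) + 1) + 1 by ring,
            show (j:ℤ) + 1 - ((m:ℤ)+1) = ((j:ℤ) - ((m:ℤ)+1)) + 1 by ring,
            zpow_add₀ (by norm_num : (-1:ℂ) ≠ 0), zpow_add₀ hc, zpow_one, zpow_one]
          ring
        rw [hCrel, hfac]
        have hj1 : ((j:ℂ) + 1) ≠ 0 := Nat.cast_add_one_ne_zero j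
        have hjf : ((j.factorial : ℂ)) ≠ 0 := by exact_mod_cast j.factorial_ne_zero
        field_simp
        push_cast
        ring
    rw [Finset.sum_congr rfl hterm, tele u m, hu]
    simp only [Nat.add_sub_cancel]
    have hCm : C (m+1) m = a (m+1) * c⁻¹ := by
      simp only [hC]
      push_cast
      rw [show (m:ℤ) - ((m:ℤ)+1) + 1 = 0 by ring, show (m:ℤ) - ((m:ℤ)+1) = -1 by ring,
        zpow_zero, zpow_neg_one]
      ring
    rw [hCm]
    field_simp
  have hF' : HasDerivAt (fun w : ℂ => Complex.exp (c * w) * ∑ k ∈ Finset.Icc 1 r,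
      ∑ l ∈ Finset.range k, C k l * w ^ l / (Nat.factorial l))
      (Complex.exp (c * (t:ℂ)) * ∑ k ∈ Finset.Icc 1 r,
        a k * (t : ℂ) ^ (k - 1) / (Nat.factorial (k - 1))) (t : ℂ) := by
    convert hF using 2
    rw [Finset.sum_congr rfl hval]
  have hfin := hF'.comp_ofReal
  convert hfin using 2


end St3Aux

theorem statement3 (p : ℝ) (hp : p ≠ 0) (t : ℝ) (r : ℕ) (hr : 0 < r) (a : ℕ → ℂ)
    (g : ℂ → ℂ)
    (hg : ∀ s : ℂ, g s = ∑ k ∈ Finset.Icc 1 r, a k * (s - Complex.I * p) ^ (-(k : ℤ)))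
    (R : ℝ → ℂ)
    (hR : ∀ τ : ℝ, R τ = Complex.exp (Complex.I * p * τ) *
      ∑ k ∈ Finset.Icc 1 r, ∑ l ∈ Finset.range k,
        a k * (-1 : ℂ) ^ ((l : ℤ) - k + 1) * (Complex.I * p) ^ ((l : ℤ) - k) *
          (τ : ℂ) ^ l / (Nat.factorial l)) :
    (∀ ρ : ℝ, 0 < ρ → ρ < |p| →
      (1 / (2 * Real.pi * Complex.I)) * ∫ θ in (0:ℝ)..(2 * Real.pi),
        (Complex.exp ((Complex.I * p + ρ * Complex.exp (Complex.I * θ)) * t) *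
            g (Complex.I * p + ρ * Complex.exp (Complex.I * θ)) /
            (Complex.I * p + ρ * Complex.exp (Complex.I * θ))) *
          (Complex.I * ρ * Complex.exp (Complex.I * θ)) = R t) ∧
    HasDerivAt R (Complex.exp (Complex.I * p * t) *
      ∑ k ∈ Finset.Icc 1 r, a k * (t : ℂ) ^ (k - 1) / (Nat.factorial (k - 1))) t := by
  set c : ℂ := Complex.I * p with hc0
  have hcabs : ‖c‖ = |p| := by
    rw [hc0, norm_mul, Complex.norm_I, one_mul, Complex.norm_real, Real.norm_eq_abs]
  have hcne : c ≠ 0 := by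
    rw [hc0]
    exact mul_ne_zero Complex.I_ne_zero (by exact_mod_cast hp)
  constructor
  · intro ρ hρ0 hρp
    have hρc : ρ < ‖c‖ := hcabs ▸ hρp
    have hz0 : ∀ z ∈ Metric.sphere c ρ, z ≠ 0 := by
      intro z hz h0
      rw [Metric.mem_sphere, h0, dist_comm, dist_zero_right] at hz
      linarith [hz ▸ hρc]
    have hzc : ∀ z ∈ Metric.sphere c ρ, z ≠ c := fun z hz h0 => by
      rw [Metric.mem_sphere, h0] at hz; simp at hz; linarith
    have hA : (∫ θ in (0:ℝ)..(2 * Real.pi),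
        (Complex.exp ((c + ρ * Complex.exp (Complex.I * θ)) * t) *
            g (c + ρ * Complex.exp (Complex.I * θ)) /
            (c + ρ * Complex.exp (Complex.I * θ))) *
          (Complex.I * ρ * Complex.exp (Complex.I * θ)))
        = ∮ z in C(c, ρ), Complex.exp (z * t) * g z / z := by
      simp only [circleIntegral, deriv_circleMap, circleMap, zero_add, smul_eq_mul]
      apply intervalIntegral.integral_congr
      intro θ _
      simp only
      rw [mul_comm Complex.I (θ:ℂ)]
      ring
    rw [hA]
    have hB : (∮ z in C(c, ρ), Complex.exp (z * t) * g z / z)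
        = ∮ z in C(c, ρ), ∑ k ∈ Finset.Icc 1 r,
            a k * (Complex.exp (z * t) * (z - c) ^ (-(k:ℤ)) / z) := by
      apply circleIntegral.integral_congr hρ0.le
      intro z hz
      simp only
      rw [hg z, Finset.mul_sum, Finset.sum_div]
      exact Finset.sum_congr rfl fun k _ => by ring
    rw [hB]
    have hint : ∀ k ∈ Finset.Icc 1 r, CircleIntegrable
        (fun z => a k * (Complex.exp (z * t) * (z - c) ^ (-(k:ℤ)) / z)) c ρ := by
      intro k _
      apply ContinuousOn.circleIntegrable hρ0.le
      apply ContinuousOn.mul continuousOn_const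
      apply ContinuousOn.div _ continuousOn_id hz0
      apply ContinuousOn.mul (Continuous.continuousOn (by continuity))
      exact (continuousOn_id.sub continuousOn_const).zpow₀ _
        (fun z hz => Or.inl (sub_ne_zero.2 (hzc z hz)))
    rw [St3Aux.circleIntegral_finset_sum _ _ _ _ hint]
    have hterm : ∀ k ∈ Finset.Icc 1 r,
        (∮ z in C(c, ρ), a k * (Complex.exp (z * t) * (z - c) ^ (-(k:ℤ)) / z))
        = a k * ((2 * Real.pi * Complex.I) * Complex.exp (c * t) *
            ∑ l ∈ Finset.range k, (-1:ℂ) ^ ((l:ℤ) - k + 1) * c ^ ((l:ℤ) - k) * ((t:ℂ) ^ l)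
              / (Nat.factorial l)) := by
      intro k _
      rw [circleIntegral.integral_const_mul, St3Aux.perk c hρ0 hρc t k]
    rw [Finset.sum_congr rfl hterm, hR t]
    have h2πI : (2 * (Real.pi:ℂ) * Complex.I) ≠ 0 := by
      simp [Real.pi_ne_zero, Complex.I_ne_zero]
    rw [show Complex.I * (p:ℂ) * (t:ℂ) = c * t by rw [hc0]]
    simp only [Finset.mul_sum]
    apply Finset.sum_congr rfl
    intro k _
    apply Finset.sum_congr rfl
    intro l _
    have hw := mul_inv_cancel₀ h2πI
    linear_combination (a k * Complex.exp (c * (t:ℂ)) *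
      ((-1:ℂ) ^ ((l:ℤ) - (k:ℤ) + 1) * c ^ ((l:ℤ) - (k:ℤ)) * (t:ℂ) ^ l
        / ((Nat.factorial l : ℂ)))) * hw
  · have := St3Aux.part2 c hcne t r hr a
    rw [show Complex.I * (p:ℂ) * (t:ℂ) = c * t by rw [hc0]]
    convert this using 2
    exact hR _
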